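/- If T_1, …, T_m are commuting operators on a Hilbert space with ‖T_j‖ ≤ 1/√m for each j, then the defect operator Δ = ∑_{β ⊆ {1,…,m}} (-1)^{|β|} T^β (T^β)^* is positive semidefinite. -/

import Mathlib

open ContinuousLinearMap Finset

namespace Stmt7Aux

variable {H : Type*} [NormedAddCommGroup H] [InnerProductSpace ℂ H] [CompleteSpace H]

lemma conj_pos {A : H →L[ℂ] H} (hA : A.IsPositive) (S : H →L[ℂ] H) :
    (S * A * star S).IsPositive := by
  have h := hA.conj_adjoint S
  simpa [star_eq_adjoint, ContinuousLinearMap.mul_def, comp_assoc] using h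

lemma mul_star_pos (S : H →L[ℂ] H) : (S * star S).IsPositive := by
  simpa using conj_pos isPositive_one S

end Stmt7Aux

section Main

open Stmt7Aux

variable {H : Type*} [NormedAddCommGroup H] [InnerProductSpace ℂ H] [CompleteSpace H]
variable {m : ℕ} (T : Fin m → H →L[ℂ] H) (hcomm : ∀ i j, Commute (T i) (T j))

/-- abbreviation for the product -/
noncomputable def Pprod (β : Finset (Fin m)) : H →L[ℂ] H :=
  β.noncommProd T (fun a _ b _ _ => hcomm a b)

/-- the partial defect operator -/
noncomputable def Adef (s : Finset (Fin m)) : H →L[ℂ] H :=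
  ∑ β ∈ s.powerset, ((-1 : ℂ) ^ β.card) • (Pprod T hcomm β * star (Pprod T hcomm β))

lemma Adef_insert {j : Fin m} {s : Finset (Fin m)} (hj : j ∉ s) :
    Adef T hcomm (insert j s) = Adef T hcomm s - T j * Adef T hcomm s * star (T j) := by
  have h1 : T j * Adef T hcomm s * star (T j)
      = ∑ β ∈ s.powerset, ((-1 : ℂ) ^ β.card) •
          (T j * (Pprod T hcomm β * star (Pprod T hcomm β)) * star (T j)) := by
    simp [Adef, Finset.mul_sum, Finset.sum_mul, mul_smul_comm, smul_mul_assoc, mul_assoc]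
  rw [Adef, Finset.sum_powerset_insert hj, h1, Adef, sub_eq_add_neg, ← Finset.sum_neg_distrib]
  congr 1
  refine Finset.sum_congr rfl fun β hβ => ?_
  have hjβ : j ∉ β := fun h => hj (Finset.mem_powerset.1 hβ h)
  have hP : Pprod T hcomm (insert j β) = T j * Pprod T hcomm β :=
    Finset.noncommProd_insert_of_notMem _ _ _ _ hjβ
  rw [Finset.card_insert_of_notMem hjβ, hP, pow_succ]
  simp [star_mul, mul_assoc]

end Main

section Main2

open Stmt7Aux ContinuousLinearMap
open scoped ComplexInnerProductSpace

variable {H : Type*} [NormedAddCommGroup H] [InnerProductSpace ℂ H] [CompleteSpace H]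

lemma oneSubC_pos {m : ℕ} (hm : 1 ≤ m) (T : Fin m → H →L[ℂ] H)
    (hT : ∀ j, ‖T j‖ ≤ 1 / Real.sqrt m) :
    ((1 : H →L[ℂ] H) - ∑ j, T j * star (T j)).IsPositive := by
  refine ⟨?_, fun x => ?_⟩
  · have h : IsSelfAdjoint (∑ j, T j * star (T j)) := by
      rw [IsSelfAdjoint, star_sum]
      exact Finset.sum_congr rfl fun j _ => by rw [star_mul, star_star]
    exact ((show IsSelfAdjoint (1 : H →L[ℂ] H) by simp [IsSelfAdjoint]).sub h).isSymmetric
  · have hCx : RCLike.re ⟪(∑ j, T j * star (T j)) x, x⟫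
        = ∑ j, ‖(star (T j)) x‖^2 := by
      rw [ContinuousLinearMap.sum_apply, sum_inner, map_sum]
      refine Finset.sum_congr rfl fun j _ => ?_
      rw [ContinuousLinearMap.mul_apply, star_eq_adjoint,
        ← ContinuousLinearMap.adjoint_inner_right]
      exact inner_self_eq_norm_sq _
    have hm0 : (0:ℝ) < m := by exact_mod_cast hm
    have hb : ∀ j : Fin m, ‖(star (T j)) x‖^2 ≤ (1/(m:ℝ)) * ‖x‖^2 := fun j => by
      have h1 : ‖(star (T j)) x‖ ≤ (1 / Real.sqrt m) * ‖x‖ := by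
        calc ‖(star (T j)) x‖ ≤ ‖star (T j)‖ * ‖x‖ := (star (T j)).le_opNorm x
        _ ≤ (1 / Real.sqrt m) * ‖x‖ := by
            rw [norm_star]; exact mul_le_mul_of_nonneg_right (hT j) (norm_nonneg x)
      calc ‖(star (T j)) x‖^2 ≤ ((1/Real.sqrt m) * ‖x‖)^2 :=
          pow_le_pow_left₀ (norm_nonneg _) h1 2
      _ = (1/(m:ℝ)) * ‖x‖^2 := by
        rw [mul_pow, div_pow, one_pow, Real.sq_sqrt hm0.le]
    have hsum : ∑ j : Fin m, ‖(star (T j)) x‖^2 ≤ ‖x‖^2 := by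
      calc ∑ j : Fin m, ‖(star (T j)) x‖^2 ≤ ∑ _j : Fin m, (1/(m:ℝ)) * ‖x‖^2 :=
          Finset.sum_le_sum fun j _ => hb j
      _ = ‖x‖^2 := by
        rw [Finset.sum_const, Finset.card_univ, Fintype.card_fin, nsmul_eq_mul]
        field_simp
    rw [reApplyInnerSelf_apply, ContinuousLinearMap.sub_apply, ContinuousLinearMap.one_apply,
      inner_sub_left, map_sub, hCx, inner_self_eq_norm_sq]
    linarith

end Main2

section Main3

open Stmt7Aux ContinuousLinearMap

variable {H : Type*} [NormedAddCommGroup H] [InnerProductSpace ℂ H] [CompleteSpace H]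

lemma sum_isPositive {ι : Type*} (s : Finset ι) (f : ι → H →L[ℂ] H)
    (h : ∀ i ∈ s, (f i).IsPositive) : (∑ i ∈ s, f i).IsPositive :=
  Finset.sum_induction f _ (fun _ _ ha hb => ha.add hb) isPositive_zero h

lemma key {m : ℕ} (hm : 1 ≤ m) (T : Fin m → H →L[ℂ] H)
    (hcomm : ∀ i j, Commute (T i) (T j))
    (hT : ∀ j, ‖T j‖ ≤ 1 / Real.sqrt m) (s : Finset (Fin m)) :
    ((1 : H →L[ℂ] H) - Adef T hcomm s).IsPositive ∧
      (Adef T hcomm s - 1 + ∑ j ∈ s, T j * star (T j)).IsPositive := by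
  classical
  induction s using Finset.induction_on with
  | empty =>
      have hA : Adef T hcomm ∅ = 1 := by
        have h0 : Pprod T hcomm ∅ = 1 := Finset.noncommProd_empty _ _
        simp [Adef, h0]
      rw [hA]
      constructor <;> simpa using isPositive_zero
  | @insert j s hj ih =>
      obtain ⟨ih1, ih2⟩ := ih
      set A := Adef T hcomm s with hAdef
      set W := ∑ i ∈ s, T i * star (T i) with hW
      have h1Ws : ((1 : H →L[ℂ] H) - W).IsPositive := by
        have hsd : ∑ i ∈ Finset.univ \ s, (T i * star (T i)) + W = ∑ i, T i * star (T i) :=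
          Finset.sum_sdiff (Finset.subset_univ s)
        have e : (1 : H →L[ℂ] H) - W
            = ((1 : H →L[ℂ] H) - ∑ i, T i * star (T i))
              + ∑ i ∈ Finset.univ \ s, (T i * star (T i)) := by
          rw [← hsd]; abel
        rw [e]
        exact (oneSubC_pos hm T hT).add
          (sum_isPositive _ _ fun i _ => mul_star_pos (T i))
      have hApos : A.IsPositive := by
        have e : (A - 1 + W) + ((1 : H →L[ℂ] H) - W) = A := by abel
        rw [← e]; exact ih2.add h1Ws
      rw [Adef_insert T hcomm hj, Finset.sum_insert hj]
      constructor
      · have e : (1 : H →L[ℂ] H) - (A - T j * A * star (T j))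
            = ((1 : H →L[ℂ] H) - A) + T j * A * star (T j) := by abel
        rw [e]; exact ih1.add (conj_pos hApos (T j))
      · have hx : T j * ((1 : H →L[ℂ] H) - A) * star (T j)
            = T j * star (T j) - T j * A * star (T j) := by
          rw [mul_sub, mul_one, sub_mul]
        have e : A - T j * A * star (T j) - 1 + (T j * star (T j) + W)
            = (A - 1 + W) + (T j * star (T j) - T j * A * star (T j)) := by abel
        rw [e, ← hx]
        exact ih2.add (conj_pos ih1 (T j))

end Main3

open ContinuousLinearMap in
/-- If `T 1, …, T m` are commuting operators with `‖T j‖ ≤ 1/√m`, then the defect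
operator `Δ = ∑_{β ⊆ {1,…,m}} (-1)^{|β|} T^β (T^β)*` is positive semidefinite. -/
theorem stmt7 {H : Type*} [NormedAddCommGroup H] [InnerProductSpace ℂ H] [CompleteSpace H]
    (m : ℕ) (hm : 1 ≤ m) (T : Fin m → H →L[ℂ] H)
    (hcomm : ∀ i j, Commute (T i) (T j))
    (hT : ∀ j, ‖T j‖ ≤ 1 / Real.sqrt m) :
    (∑ β : Finset (Fin m),
        ((-1 : ℂ) ^ β.card) •
          (β.noncommProd T (fun a _ b _ _ => hcomm a b) *
            adjoint (β.noncommProd T (fun a _ b _ _ => hcomm a b)))).IsPositive := by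
  have hgoal : (∑ β : Finset (Fin m),
        ((-1 : ℂ) ^ β.card) •
          (β.noncommProd T (fun a _ b _ _ => hcomm a b) *
            adjoint (β.noncommProd T (fun a _ b _ _ => hcomm a b))))
      = Adef T hcomm Finset.univ := by
    rw [Adef, Finset.powerset_univ]
    exact Finset.sum_congr rfl fun β _ => by rw [Pprod, star_eq_adjoint]
  rw [hgoal]
  obtain ⟨h1, h2⟩ := key hm T hcomm hT (Finset.univ : Finset (Fin m))
  have h3 : ((1 : H →L[ℂ] H) - ∑ j ∈ Finset.univ, T j * star (T j)).IsPositive :=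
    oneSubC_pos hm T hT
  have e : (Adef T hcomm Finset.univ - 1 + ∑ j ∈ Finset.univ, T j * star (T j))
      + ((1 : H →L[ℂ] H) - ∑ j ∈ Finset.univ, T j * star (T j))
      = Adef T hcomm Finset.univ := by abel
  rw [← e]
  exact h2.add h3
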